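/- For a Hénon type map f of algebraic degree d ≥ 2 on ℂ², the Green function G⁺(z) := lim_{n→∞} d⁻ⁿ log⁺‖fⁿ(z)‖ exists and satisfies the invariance relation G⁺(f(z)) = d·G⁺(z) for all z ∈ ℂ². -/

import Mathlib

/-- The Hénon map `h(z₁,z₂) = (p(z₁) + a z₂, z₁)`. -/
noncomputable def henon (p : Polynomial ℂ) (a : ℂ) : ℂ × ℂ → ℂ × ℂ :=
  fun z => (p.eval z.1 + a * z.2, z.1)

/-- The Hénon type map `f = h₁ ∘ ⋯ ∘ hₘ`, a composition of Hénon maps. -/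
noncomputable def henonComp {m : ℕ} (p : Fin m → Polynomial ℂ) (a : Fin m → ℂ) :
    ℂ × ℂ → ℂ × ℂ :=
  (List.ofFn fun i => henon (p i) (a i)).foldr (· ∘ ·) id


lemma eval_norm_le (q : Polynomial ℂ) (n : ℕ) (hn : q.natDegree ≤ n) (x : ℂ) :
    ‖q.eval x‖ ≤ (∑ i ∈ Finset.range (n+1), ‖q.coeff i‖) * max ‖x‖ 1 ^ n := by
  rw [Polynomial.eval_eq_sum_range' (Nat.lt_succ_of_le hn)]
  refine (norm_sum_le _ _).trans ?_
  rw [Finset.sum_mul]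
  refine Finset.sum_le_sum fun i hi => ?_
  rw [norm_mul, norm_pow]
  have h1 : (1:ℝ) ≤ max ‖x‖ 1 := le_max_right _ _
  have : ‖x‖ ^ i ≤ max ‖x‖ 1 ^ n := by
    calc ‖x‖ ^ i ≤ max ‖x‖ 1 ^ i := pow_le_pow_left₀ (norm_nonneg _) (le_max_left _ _) i
    _ ≤ max ‖x‖ 1 ^ n := pow_le_pow_right₀ h1 (Nat.lt_succ_iff.mp (Finset.mem_range.mp hi))
  exact mul_le_mul_of_nonneg_left this (norm_nonneg _)

lemma eval_norm_lower (q : Polynomial ℂ) (hq : 1 ≤ q.natDegree) (x : ℂ) (hx : 1 ≤ ‖x‖) :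
    ‖q.leadingCoeff‖ * ‖x‖ ^ q.natDegree
      - (∑ i ∈ Finset.range q.natDegree, ‖q.eraseLead.coeff i‖) * ‖x‖ ^ (q.natDegree - 1)
    ≤ ‖q.eval x‖ := by
  have hmax : max ‖x‖ 1 = ‖x‖ := max_eq_left hx
  have h1 : ‖q.eraseLead.eval x‖ ≤ (∑ i ∈ Finset.range q.natDegree, ‖q.eraseLead.coeff i‖) * ‖x‖ ^ (q.natDegree - 1) := by
    have := eval_norm_le q.eraseLead (q.natDegree - 1) (Polynomial.eraseLead_natDegree_le q) x
    rwa [hmax, Nat.sub_add_cancel hq] at this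
  have h2 := congrArg (Polynomial.eval x) (Polynomial.eraseLead_add_C_mul_X_pow q)
  simp only [Polynomial.eval_add, Polynomial.eval_mul, Polynomial.eval_C, Polynomial.eval_pow,
    Polynomial.eval_X] at h2
  rw [← h2]
  have h : ‖q.leadingCoeff * x ^ q.natDegree‖
      ≤ ‖q.eraseLead.eval x + q.leadingCoeff * x ^ q.natDegree‖ + ‖q.eraseLead.eval x‖ := by
    have := norm_add_le (q.eraseLead.eval x + q.leadingCoeff * x ^ q.natDegree)
      (-(q.eraseLead.eval x))
    simpa using this
  have h3 : ‖q.leadingCoeff * x ^ q.natDegree‖ = ‖q.leadingCoeff‖ * ‖x‖ ^ q.natDegree := by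
    rw [norm_mul, norm_pow]
  linarith

lemma henon_estimate (q : Polynomial ℂ) (b : ℂ) (hq : 2 ≤ q.natDegree) :
    ∃ R : ℝ, 1 ≤ R ∧ ∃ c : ℝ, 0 ≤ c ∧ ∀ z : ℂ × ℂ, max ‖z.2‖ R ≤ ‖z.1‖ →
      max ‖(henon q b z).2‖ ‖z.1‖ ≤ ‖(henon q b z).1‖ ∧
      |Real.log ‖henon q b z‖ - (q.natDegree : ℝ) * Real.log ‖z‖| ≤ c := by
  have hq0 : q ≠ 0 := fun h => by simp [h] at hq
  set n := q.natDegree with hn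
  set l := ‖q.leadingCoeff‖ with hl
  have hl0 : 0 < l := norm_pos_iff.mpr (Polynomial.leadingCoeff_ne_zero.mpr hq0)
  set S : ℝ := ∑ i ∈ Finset.range n, ‖q.eraseLead.coeff i‖ with hS
  set T : ℝ := ∑ i ∈ Finset.range (n+1), ‖q.coeff i‖ with hT
  have hS0 : 0 ≤ S := Finset.sum_nonneg fun _ _ => norm_nonneg _
  have hT0 : l ≤ T := Finset.single_le_sum (f := fun i => ‖q.coeff i‖)
    (fun _ _ => norm_nonneg _) (by simp [Finset.mem_range]; omega)
  refine ⟨max 1 (2 * (S + ‖b‖ + 1) / l), le_max_left _ _,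
    max (Real.log (T + ‖b‖)) (-Real.log (l/2)) ⊔ 0, le_max_right _ _, fun z hz => ?_⟩
  set X := ‖z.1‖ with hX
  have hX1 : (1:ℝ) ≤ X := le_trans (le_max_left _ _) (le_trans (le_max_right _ _) hz)
  have hXS : 2 * (S + ‖b‖ + 1) / l ≤ X := le_trans (le_max_right _ _) (le_trans (le_max_right _ _) hz)
  have hz2 : ‖z.2‖ ≤ X := le_trans (le_max_left _ _) hz
  have hX0 : 0 < X := lt_of_lt_of_le one_pos hX1
  have hXl : 2 * (S + ‖b‖ + 1) ≤ l * X := by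
    rw [div_le_iff₀ hl0] at hXS; linarith [mul_comm X l]
  -- lower bound on first coordinate
  have hpow1 : X ≤ X ^ (n - 1) := by
    calc X = X ^ 1 := (pow_one X).symm
    _ ≤ X ^ (n-1) := pow_le_pow_right₀ hX1 (by omega)
  have hpown : X ^ (n-1) * X = X ^ n := by
    rw [← pow_succ]; congr 1; omega
  have hlow : (l/2) * X ^ n ≤ ‖(henon q b z).1‖ := by
    have h1 : l * X ^ n - S * X ^ (n-1) ≤ ‖q.eval z.1‖ := eval_norm_lower q (by omega) z.1 hX1
    have h2 : ‖(henon q b z).1‖ = ‖q.eval z.1 + b * z.2‖ := rfl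
    have h3 : ‖q.eval z.1‖ - ‖b‖ * X ≤ ‖q.eval z.1 + b * z.2‖ := by
      have := norm_add_le (q.eval z.1 + b * z.2) (-(b * z.2))
      have hb : ‖b * z.2‖ ≤ ‖b‖ * X := by
        rw [norm_mul]; exact mul_le_mul_of_nonneg_left hz2 (norm_nonneg _)
      simp only [add_neg_cancel_right, norm_neg] at this
      linarith
    have key : (l/2) * X ^ n ≤ l * X ^ n - S * X ^ (n-1) - ‖b‖ * X := by
      have h4 : ‖b‖ * X ≤ ‖b‖ * X ^ (n-1) := mul_le_mul_of_nonneg_left hpow1 (norm_nonneg _)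
      have h5 : (S + ‖b‖) * X ^ (n-1) ≤ (l/2) * X * X ^ (n-1) := by
        apply mul_le_mul_of_nonneg_right _ (by positivity)
        nlinarith
      have h6 : (l/2) * X * X ^ (n-1) = (l/2) * X ^ n := by
        rw [mul_assoc, mul_comm X, hpown]
      nlinarith
    rw [h2]; linarith
  have hXn1 : X ≤ X ^ n := by
    calc X = X ^ 1 := (pow_one X).symm
    _ ≤ X ^ n := pow_le_pow_right₀ hX1 (by omega)
  have hfirst : X ≤ ‖(henon q b z).1‖ := by
    have : X ≤ (l/2) * X ^ n := by
      have hb0 : (0:ℝ) ≤ ‖b‖ := norm_nonneg b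
      have h2lX : 2 ≤ l * X := by linarith
      have h1lX : 1 ≤ (l/2) * X := by
        have : (l/2) * X = (l * X)/2 := by ring
        linarith
      have : 1 * X ≤ ((l/2) * X) * X := mul_le_mul_of_nonneg_right h1lX (le_of_lt hX0)
      calc X = 1 * X := (one_mul X).symm
      _ ≤ (l/2) * X * X := this
      _ ≤ (l/2) * X * X ^ (n-1) := mul_le_mul_of_nonneg_left hpow1 (by positivity)
      _ = (l/2) * X ^ n := by rw [mul_assoc, mul_comm X, hpown]
    linarith
  have hsnd : (henon q b z).2 = z.1 := rfl
  have hmem : max ‖(henon q b z).2‖ ‖z.1‖ ≤ ‖(henon q b z).1‖ := by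
    rw [hsnd]; simpa using hfirst
  refine ⟨hmem, ?_⟩
  -- upper bound on first coordinate
  have hupp : ‖(henon q b z).1‖ ≤ (T + ‖b‖) * X ^ n := by
    have h1 : ‖q.eval z.1‖ ≤ T * X ^ n := by
      have := eval_norm_le q n le_rfl z.1
      rwa [max_eq_left hX1] at this
    have h2 : ‖b * z.2‖ ≤ ‖b‖ * X ^ n := by
      rw [norm_mul]
      exact mul_le_mul (le_refl _) (le_trans hz2 hXn1) (norm_nonneg _) (norm_nonneg _)
    calc ‖(henon q b z).1‖ ≤ ‖q.eval z.1‖ + ‖b * z.2‖ := norm_add_le _ _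
    _ ≤ T * X ^ n + ‖b‖ * X ^ n := add_le_add h1 h2
    _ = (T + ‖b‖) * X ^ n := by ring
  -- norms
  have hnormz : ‖z‖ = X := by
    rw [Prod.norm_def]; exact max_eq_left hz2
  have hnormf : ‖henon q b z‖ = ‖(henon q b z).1‖ := by
    rw [Prod.norm_def]
    exact max_eq_left (le_trans (le_max_left _ _) hmem)
  have hf0 : 0 < ‖(henon q b z).1‖ := lt_of_lt_of_le hX0 hfirst
  have hXn0 : (0:ℝ) < X ^ n := by positivity
  have hb0' : (0:ℝ) ≤ ‖b‖ := norm_nonneg b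
  have hTb : (0:ℝ) < T + ‖b‖ := by linarith
  have hlog1 : Real.log ‖henon q b z‖ ≤ Real.log (T + ‖b‖) + n * Real.log X := by
    rw [hnormf]
    calc Real.log ‖(henon q b z).1‖ ≤ Real.log ((T + ‖b‖) * X ^ n) := Real.log_le_log hf0 hupp
    _ = Real.log (T + ‖b‖) + Real.log (X ^ n) := Real.log_mul (ne_of_gt hTb) (ne_of_gt hXn0)
    _ = Real.log (T + ‖b‖) + n * Real.log X := by rw [Real.log_pow]
  have hlog2 : Real.log (l/2) + n * Real.log X ≤ Real.log ‖henon q b z‖ := by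
    rw [hnormf]
    calc Real.log (l/2) + n * Real.log X = Real.log ((l/2) * X ^ n) := by
          rw [Real.log_mul (by positivity : (l/2:ℝ) ≠ 0) (ne_of_gt hXn0), Real.log_pow]
    _ ≤ Real.log ‖(henon q b z).1‖ := Real.log_le_log (by positivity) hlow
  rw [hnormz, abs_le]
  constructor
  · have : -(max (Real.log (T + ‖b‖)) (-Real.log (l/2)) ⊔ 0) ≤ Real.log (l/2) := by
      have h := le_max_left (Real.log (T + ‖b‖)) (-Real.log (l/2))
      have h2 := le_max_right (Real.log (T + ‖b‖)) (-Real.log (l/2))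
      have h3 := le_max_left (max (Real.log (T + ‖b‖)) (-Real.log (l/2))) (0:ℝ)
      linarith
    linarith
  · have : Real.log (T + ‖b‖) ≤ max (Real.log (T + ‖b‖)) (-Real.log (l/2)) ⊔ 0 := 
      le_trans (le_max_left _ _) (le_max_left _ _)
    linarith

lemma henon_escape_or_bounded (q : Polynomial ℂ) (b : ℂ) (R : ℝ) (z : ℂ × ℂ) :
    max ‖(henon q b z).2‖ R ≤ ‖(henon q b z).1‖ ∨ ‖henon q b z‖ ≤ max ‖z‖ R := by
  by_cases h : max ‖(henon q b z).2‖ R ≤ ‖(henon q b z).1‖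
  · exact Or.inl h
  · right
    push_neg at h
    have h2 : (henon q b z).2 = z.1 := rfl
    have hz1 : ‖z.1‖ ≤ ‖z‖ := by rw [Prod.norm_def]; exact le_max_left _ _
    rw [Prod.norm_def]
    rw [h2] at h ⊢
    refine max_le ?_ ?_
    · exact le_trans (le_of_lt h) (max_le (le_trans hz1 (le_max_left _ _)) (le_max_right _ _))
    · exact le_trans hz1 (le_max_left _ _)

lemma henon_upper (q : Polynomial ℂ) (b : ℂ) (hq : 1 ≤ q.natDegree) :
    ∃ C : ℝ, 1 ≤ C ∧ ∀ z : ℂ × ℂ,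
      max ‖henon q b z‖ 1 ≤ C * max ‖z‖ 1 ^ q.natDegree := by
  set n := q.natDegree with hn
  set T : ℝ := ∑ i ∈ Finset.range (n+1), ‖q.coeff i‖ with hT
  have hT0 : 0 ≤ T := Finset.sum_nonneg fun _ _ => norm_nonneg _
  have hb0 : (0:ℝ) ≤ ‖b‖ := norm_nonneg b
  refine ⟨T + ‖b‖ + 1, by linarith, fun z => ?_⟩
  set M := max ‖z‖ 1 with hM
  have hM1 : (1:ℝ) ≤ M := le_max_right _ _
  have hM0 : (0:ℝ) < M := lt_of_lt_of_le one_pos hM1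
  have hMn : (1:ℝ) ≤ M ^ n := one_le_pow₀ hM1
  have hMM : M ≤ M ^ n := by
    calc M = M ^ 1 := (pow_one M).symm
    _ ≤ M ^ n := pow_le_pow_right₀ hM1 hq
  have hz1 : ‖z.1‖ ≤ M := le_trans (by rw [Prod.norm_def]; exact le_max_left _ _) (le_max_left _ _)
  have hz2 : ‖z.2‖ ≤ M := le_trans (by rw [Prod.norm_def]; exact le_max_right _ _) (le_max_left _ _)
  have hmz1 : max ‖z.1‖ 1 ≤ M := max_le hz1 hM1
  have h1 : ‖(henon q b z).1‖ ≤ (T + ‖b‖) * M ^ n := by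
    have he : ‖q.eval z.1‖ ≤ T * M ^ n := by
      refine le_trans (eval_norm_le q n le_rfl z.1) ?_
      exact mul_le_mul_of_nonneg_left (pow_le_pow_left₀ (le_max_of_le_right one_pos.le) hmz1 n) hT0
    have hb : ‖b * z.2‖ ≤ ‖b‖ * M ^ n := by
      rw [norm_mul]
      exact mul_le_mul (le_refl _) (le_trans hz2 hMM) (norm_nonneg _) hb0
    calc ‖(henon q b z).1‖ ≤ ‖q.eval z.1‖ + ‖b * z.2‖ := norm_add_le _ _
    _ ≤ T * M ^ n + ‖b‖ * M ^ n := add_le_add he hb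
    _ = (T + ‖b‖) * M ^ n := by ring
  have hC : M ^ n ≤ (T + ‖b‖ + 1) * M ^ n := by nlinarith
  refine max_le ?_ (le_trans hMn hC)
  rw [Prod.norm_def]
  exact max_le (le_trans h1 (by nlinarith [hMn])) (le_trans (le_trans hz1 hMM) hC)

lemma henonComp_zero (p : Fin 0 → Polynomial ℂ) (a : Fin 0 → ℂ) : henonComp p a = id := by
  simp [henonComp]

lemma henonComp_succ {m : ℕ} (p : Fin (m+1) → Polynomial ℂ) (a : Fin (m+1) → ℂ) :
    henonComp p a = henon (p 0) (a 0) ∘ henonComp (fun i => p i.succ) (fun i => a i.succ) := by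
  simp [henonComp, List.ofFn_succ]

lemma main_estimate (m : ℕ) (p : Fin m → Polynomial ℂ) (a : Fin m → ℂ)
    (hdeg : ∀ i, 2 ≤ (p i).natDegree) :
    ∃ R : ℝ, 1 ≤ R ∧ ∃ c : ℝ, 0 ≤ c ∧ ∀ z : ℂ × ℂ,
      (max ‖z.2‖ R ≤ ‖z.1‖ →
        max ‖(henonComp p a z).2‖ ‖z.1‖ ≤ ‖(henonComp p a z).1‖ ∧
        |Real.log ‖henonComp p a z‖ - ((∏ i, (p i).natDegree : ℕ) : ℝ) * Real.log ‖z‖| ≤ c) ∧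
      (max ‖(henonComp p a z).2‖ R ≤ ‖(henonComp p a z).1‖ ∨ ‖henonComp p a z‖ ≤ max ‖z‖ R) := by
  induction m with
  | zero =>
    refine ⟨1, le_rfl, 0, le_rfl, fun z => ?_⟩
    rw [henonComp_zero]
    constructor
    · intro hz
      constructor
      · simpa using max_le (le_trans (le_max_left _ _) hz) le_rfl
      · simp
    · right; simp only [id_eq]; exact le_max_left _ _
  | succ m ih =>
    obtain ⟨Rg, hRg1, cg, hcg0, hg⟩ := ih (fun i => p i.succ) (fun i => a i.succ) (fun i => hdeg _)
    obtain ⟨R0, hR01, c0, hc00, h0⟩ := henon_estimate (p 0) (a 0) (hdeg 0)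
    have hd00 : (0:ℝ) ≤ ((p 0).natDegree : ℝ) := Nat.cast_nonneg _
    refine ⟨max R0 Rg, le_trans hRg1 (le_max_right _ _), c0 + ((p 0).natDegree : ℝ) * cg,
      by positivity, fun z => ?_⟩
    rw [henonComp_succ]
    simp only [Function.comp_apply]
    set g := henonComp (fun i => p i.succ) (fun i => a i.succ) with hgdef
    set w := g z with hw
    constructor
    · intro hz
      have hzg : max ‖z.2‖ Rg ≤ ‖z.1‖ := le_trans (max_le_max le_rfl (le_max_right R0 Rg)) hz
      obtain ⟨hmem, hlog⟩ := (hg z).1 hzg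
      have hz1R : max R0 Rg ≤ ‖z.1‖ := le_trans (le_max_right _ _) hz
      have hw1 : ‖z.1‖ ≤ ‖w.1‖ := le_trans (le_max_right _ _) hmem
      have hw0 : max ‖w.2‖ R0 ≤ ‖w.1‖ :=
        max_le (le_trans (le_max_left _ _) hmem)
          (le_trans (le_trans (le_max_left _ _) hz1R) hw1)
      obtain ⟨hmem0, hlog0⟩ := h0 w hw0
      refine ⟨max_le (le_trans (le_max_left _ _) hmem0)
          (le_trans hw1 (le_trans (le_max_right _ _) hmem0)), ?_⟩
      have hprd : ((∏ i : Fin (m+1), (p i).natDegree : ℕ) : ℝ)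
          = ((p 0).natDegree : ℝ) * ((∏ i : Fin m, (p i.succ).natDegree : ℕ) : ℝ) := by
        rw [Fin.prod_univ_succ]; push_cast; ring
      rw [hprd]
      have hsplit : Real.log ‖henon (p 0) (a 0) w‖
          - ((p 0).natDegree : ℝ) * ((∏ i : Fin m, (p i.succ).natDegree : ℕ) : ℝ) * Real.log ‖z‖
          = (Real.log ‖henon (p 0) (a 0) w‖ - ((p 0).natDegree : ℝ) * Real.log ‖w‖)
            + ((p 0).natDegree : ℝ)
              * (Real.log ‖w‖ - ((∏ i : Fin m, (p i.succ).natDegree : ℕ) : ℝ) * Real.log ‖z‖) := by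
        ring
      rw [hsplit]
      refine le_trans (abs_add_le _ _) ?_
      have h2 : |((p 0).natDegree : ℝ)
          * (Real.log ‖w‖ - ((∏ i : Fin m, (p i.succ).natDegree : ℕ) : ℝ) * Real.log ‖z‖)|
          ≤ ((p 0).natDegree : ℝ) * cg := by
        rw [abs_mul, abs_of_nonneg hd00]
        exact mul_le_mul_of_nonneg_left hlog hd00
      linarith
    · rcases (hg z).2 with hVg | hbd
      · by_cases hcase : max R0 Rg ≤ ‖w.1‖
        · have hw0 : max ‖w.2‖ R0 ≤ ‖w.1‖ :=
            max_le (le_trans (le_max_left _ _) hVg) (le_trans (le_max_left _ _) hcase)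
          obtain ⟨hmem0, _⟩ := h0 w hw0
          left
          exact max_le (le_trans (le_max_left _ _) hmem0)
            (le_trans hcase (le_trans (le_max_right _ _) hmem0))
        · push_neg at hcase
          rcases henon_escape_or_bounded (p 0) (a 0) (max R0 Rg) w with h | h
          · left; exact h
          · right
            have hwnorm : ‖w‖ ≤ max R0 Rg := by
              rw [Prod.norm_def]
              exact max_le (le_of_lt hcase)
                (le_trans (le_trans (le_max_left _ _) hVg) (le_of_lt hcase))
            exact le_trans h (max_le (le_trans hwnorm (le_max_right _ _)) (le_max_right _ _))
      · rcases henon_escape_or_bounded (p 0) (a 0) (max R0 Rg) w with h | h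
        · left; exact h
        · right
          refine le_trans h (max_le ?_ (le_max_right _ _))
          exact le_trans hbd
            (max_le (le_max_left _ _) (le_trans (le_max_right R0 Rg) (le_max_right _ _)))

/-- For a Hénon type map `f` of algebraic degree `d = ∏ deg pⱼ ≥ 2` on `ℂ²`, the
Green function `G⁺(z) := lim d⁻ⁿ log⁺ ‖fⁿ(z)‖` exists (here
`log⁺ t = log (max t 1)`) and satisfies `G⁺(f z) = d · G⁺(z)` for all `z`. -/
theorem green_function_exists_invariant (m : ℕ) (p : Fin (m + 1) → Polynomial ℂ)
    (a : Fin (m + 1) → ℂ) (hdeg : ∀ i, 2 ≤ (p i).natDegree) (ha : ∀ i, a i ≠ 0) :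
    ∃ G : ℂ × ℂ → ℝ,
      (∀ z : ℂ × ℂ, Filter.Tendsto
        (fun n : ℕ => (((∏ i, (p i).natDegree : ℕ) : ℝ) ^ n)⁻¹ *
          Real.log (max ‖(henonComp p a)^[n] z‖ 1))
        Filter.atTop (nhds (G z))) ∧
      ∀ z : ℂ × ℂ, G (henonComp p a z) = ((∏ i, (p i).natDegree : ℕ) : ℝ) * G z := by
  set f := henonComp p a with hf
  set D : ℝ := ((∏ i, (p i).natDegree : ℕ) : ℝ) with hD
  set u : (ℂ × ℂ) → ℕ → ℝ := fun z n => (D ^ n)⁻¹ * Real.log (max ‖f^[n] z‖ 1) with hu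
  have hD2 : (2:ℝ) ≤ D := by
    rw [hD]
    have h2 : (2:ℕ) ≤ ∏ i, (p i).natDegree := by
      calc (2:ℕ) = 2 * 1 := by norm_num
      _ ≤ (p 0).natDegree * ∏ i : Fin m, (p i.succ).natDegree := by
          refine Nat.mul_le_mul (hdeg 0) ?_
          exact Nat.one_le_iff_ne_zero.mpr (Finset.prod_ne_zero_iff.mpr
            (fun i _ => by have := hdeg i.succ; omega))
      _ = ∏ i, (p i).natDegree := (Fin.prod_univ_succ (fun i => (p i).natDegree)).symm
    exact_mod_cast h2
  have hD0 : (0:ℝ) < D := by linarith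
  have hD1 : (1:ℝ) < D := by linarith
  have hDn0 : ∀ n : ℕ, (0:ℝ) < D ^ n := fun n => pow_pos hD0 n
  have hDinv : D⁻¹ < 1 := by
    rw [inv_lt_one_iff₀]; right; exact hD1
  obtain ⟨R, hR1, c, hc0, hmain⟩ := main_estimate (m+1) p a hdeg
  -- convergence for every z
  have conv : ∀ z : ℂ × ℂ, ∃ L : ℝ, Filter.Tendsto (u z) Filter.atTop (nhds L) := by
    intro z
    by_cases hesc : ∃ N : ℕ, max ‖(f^[N] z).2‖ R ≤ ‖(f^[N] z).1‖
    · -- escaping case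
      obtain ⟨N, hN⟩ := hesc
      have hVn : ∀ k : ℕ, max ‖(f^[N+k] z).2‖ R ≤ ‖(f^[N+k] z).1‖ := by
        intro k
        induction k with
        | zero => simpa using hN
        | succ k ihk =>
          have hstep := (hmain (f^[N+k] z)).1 ihk
          have : f^[N+(k+1)] z = f (f^[N+k] z) := by
            rw [← Nat.add_assoc, Function.iterate_succ_apply']
          rw [this]
          exact max_le (le_trans (le_max_left _ _) hstep.1)
            (le_trans (le_trans (le_max_right _ _) ihk) (le_trans (le_max_right _ _) hstep.1))
      have hnorm : ∀ k : ℕ, max ‖f^[N+k] z‖ 1 = ‖f^[N+k] z‖ := by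
        intro k
        refine max_eq_left ?_
        rw [Prod.norm_def]
        exact le_trans hR1 (le_trans (le_trans (le_max_right _ _) (hVn k)) (le_max_left _ _))
      have hdist : ∀ k : ℕ, dist (u z (k + N)) (u z (k + 1 + N))
          ≤ (c * (D ^ (N+1))⁻¹) * (D⁻¹) ^ k := by
        intro k
        have hcomm : k + N = N + k := Nat.add_comm k N
        have hcomm1 : k + 1 + N = N + (k+1) := by omega
        rw [Real.dist_eq, hcomm, hcomm1]
        have hstep := (hmain (f^[N+k] z)).1 (hVn k)
        have hit : f^[N+(k+1)] z = f (f^[N+k] z) := by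
          rw [← Nat.add_assoc, Function.iterate_succ_apply']
        have hval : u z (N+k) - u z (N+(k+1))
            = -(((D ^ (N+k+1))⁻¹) * (Real.log ‖f (f^[N+k] z)‖ - D * Real.log ‖f^[N+k] z‖)) := by
          have hnorm1 : max ‖f (f^[N+k] z)‖ 1 = ‖f (f^[N+k] z)‖ := by
            have h := hnorm (k+1)
            rwa [show N + (k+1) = N + k + 1 from rfl, Function.iterate_succ_apply'] at h
          rw [hu]
          simp only
          rw [hnorm k, show N + (k+1) = N + k + 1 from rfl, Function.iterate_succ_apply', hnorm1,
            pow_succ]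
          have hne : D ≠ 0 := ne_of_gt hD0
          have hne2 : D ^ (N+k) ≠ 0 := ne_of_gt (hDn0 _)
          field_simp
          ring
        rw [hval, abs_neg, abs_mul, abs_of_nonneg (le_of_lt (inv_pos.mpr (hDn0 _)))]
        have hle := hstep.2
        calc (D ^ (N+k+1))⁻¹ * |Real.log ‖f (f^[N+k] z)‖ - D * Real.log ‖f^[N+k] z‖|
            ≤ (D ^ (N+k+1))⁻¹ * c := by
              refine mul_le_mul_of_nonneg_left ?_ (le_of_lt (inv_pos.mpr (hDn0 _)))
              exact hle
          _ = (c * (D ^ (N+1))⁻¹) * (D⁻¹) ^ k := by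
              rw [inv_pow]
              rw [show N+k+1 = (N+1)+k by omega, pow_add]
              rw [mul_inv]
              ring
      have hcauchy : CauchySeq (fun k => u z (k + N)) := by
        refine cauchySeq_of_le_geometric D⁻¹ (c * (D ^ (N+1))⁻¹) hDinv ?_
        intro k
        simpa using hdist k
      obtain ⟨L, hL⟩ := cauchySeq_tendsto_of_complete hcauchy
      exact ⟨L, (Filter.tendsto_add_atTop_iff_nat N).mp hL⟩
    · -- bounded case
      push_neg at hesc
      have hbdd : ∀ n : ℕ, ‖f^[n] z‖ ≤ max ‖z‖ R := by
        intro n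
        induction n with
        | zero => simpa using le_max_left _ _
        | succ n ihn =>
          rcases (hmain (f^[n] z)).2 with hV | hb
          · exfalso
            have hco := hesc (n+1)
            rw [Function.iterate_succ_apply'] at hco
            exact absurd hV (not_le.mpr hco)
          · rw [Function.iterate_succ_apply']
            exact le_trans hb (max_le ihn (le_max_right _ _))
      refine ⟨0, ?_⟩
      have hK : (0:ℝ) ≤ Real.log (max (max ‖z‖ R) 1) := Real.log_nonneg (le_max_right _ _)
      have hub : ∀ n, u z n ≤ (D⁻¹)^n * Real.log (max (max ‖z‖ R) 1) := by
        intro n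
        rw [hu]; simp only
        rw [← inv_pow]
        refine mul_le_mul_of_nonneg_left ?_ (by positivity)
        refine Real.log_le_log (by positivity) ?_
        exact max_le_max (hbdd n) le_rfl
      have hlb : ∀ n, 0 ≤ u z n := by
        intro n
        rw [hu]; simp only
        exact mul_nonneg (le_of_lt (inv_pos.mpr (hDn0 n))) (Real.log_nonneg (le_max_right _ _))
      have htend : Filter.Tendsto (fun n : ℕ => (D⁻¹)^n * Real.log (max (max ‖z‖ R) 1))
          Filter.atTop (nhds 0) := by
        have h0 : Filter.Tendsto (fun n : ℕ => (D⁻¹)^n) Filter.atTop (nhds 0) :=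
          tendsto_pow_atTop_nhds_zero_of_lt_one (by positivity) hDinv
        simpa using h0.mul_const (Real.log (max (max ‖z‖ R) 1))
      exact squeeze_zero hlb hub htend
  choose G hG using conv
  refine ⟨G, hG, fun z => ?_⟩
  have h1 : Filter.Tendsto (fun n => u z (n + 1)) Filter.atTop (nhds (G z)) :=
    (Filter.tendsto_add_atTop_iff_nat 1).mpr (hG z)
  have h2 : (fun n => u (f z) n) = fun n => D * u z (n + 1) := by
    funext n
    have hit : f^[n+1] z = f^[n] (f z) := Function.iterate_succ_apply f n z
    rw [hu]; simp only
    rw [← hit, pow_succ]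
    have hne : D ≠ 0 := ne_of_gt hD0
    have hne2 : D ^ n ≠ 0 := ne_of_gt (hDn0 _)
    field_simp
  have h3 : Filter.Tendsto (fun n => u (f z) n) Filter.atTop (nhds (D * G z)) := by
    rw [h2]
    exact h1.const_mul D
  exact tendsto_nhds_unique (hG (f z)) h3
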